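/- Every submetry f : ℝ^m → ℝ^n between Euclidean spaces is, up to an isometry of ℝ^n, an orthogonal projection composed with a translation. In particular, the fibers of f are parallel affine (m−n)-dimensional subspaces of ℝ^m. -/

import Mathlib

open Metric Set Filter Topology
open scoped RealInnerProductSpace

lemma submetry_real_core (c u s ny B : ℝ) (hny0 : 0 ≤ ny) (h : ny < s) (hu : u ≤ ny)
    (hc2 : c ^ 2 = ny ^ 2 - 2 * (u * s) + s ^ 2) (hc0 : 0 ≤ c) (hB0 : 0 ≤ B)
    (hBkey : 2 * (s - ny) * B = ny ^ 2) : c ≤ s - u + B := by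
  have h1 : ny ^ 2 ≤ 2 * (s - u) * B := by nlinarith
  have h2 : c ^ 2 ≤ (s - u + B) ^ 2 := by nlinarith [sq_nonneg u, sq_nonneg B]
  nlinarith [h2, hc0]

section aux
variable {E F : Type*} [NormedAddCommGroup E] [InnerProductSpace ℝ E]
  [NormedAddCommGroup F] [InnerProductSpace ℝ F]

/-- Key norm estimate. -/
lemma submetry_norm_sub_bound (y p : E) (h : ‖y‖ < ‖p‖) :
    ‖y - p‖ ≤ ‖p‖ - ⟪y, p⟫ / ‖p‖ + ‖y‖ ^ 2 / (2 * (‖p‖ - ‖y‖)) := by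
  have hs0 : (0:ℝ) < ‖p‖ := lt_of_le_of_lt (norm_nonneg y) h
  have hD : (0:ℝ) < ‖p‖ - ‖y‖ := by linarith
  refine submetry_real_core _ _ _ _ _ (norm_nonneg y) h ?_ ?_ (norm_nonneg _) ?_ ?_
  · exact (div_le_iff₀ hs0).2 ((abs_le.1 (abs_real_inner_le_norm y p)).2)
  · have := norm_sub_sq_real y p
    rw [this]; field_simp
  · positivity
  · field_simp
end aux

section aux2
variable {E F : Type*} [NormedAddCommGroup E] [InnerProductSpace ℝ E]
  [NormedAddCommGroup F] [InnerProductSpace ℝ F]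

lemma submetry_lemP (f : E → F) (hlip : ∀ a b : E, dist (f a) (f b) ≤ dist a b)
    (w : F) (hw : ‖w‖ = 1) (K : ℝ) (hK : 0 < K) (p : E)
    (hp : f p = f 0 + K • w) (hpn : ‖p‖ ≤ K + 1/K) (y : E) (hy : ‖y‖ < K) :
    ⟪y, p⟫ / ‖p‖ - (1/K + ‖y‖ ^ 2 / (2 * (K - ‖y‖))) ≤ ⟪f y - f 0, w⟫ := by
  have hKp : K ≤ ‖p‖ := by
    have h1 : dist (f p) (f 0) ≤ dist p 0 := hlip p 0
    rw [dist_eq_norm, dist_eq_norm, hp, sub_zero] at h1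
    simpa [norm_smul, abs_of_pos hK, hw] using h1
  have hyp : ‖y‖ < ‖p‖ := lt_of_lt_of_le hy hKp
  have hineq : K - ‖y - p‖ ≤ ⟪f y - f 0, w⟫ := by
    have h2 : ⟪f p - f y, w⟫ ≤ ‖y - p‖ := by
      calc ⟪f p - f y, w⟫ ≤ ‖f p - f y‖ * ‖w‖ := real_inner_le_norm _ _
        _ = ‖f p - f y‖ := by rw [hw, mul_one]
        _ ≤ ‖p - y‖ := by
            have := hlip p y
            rwa [dist_eq_norm, dist_eq_norm] at this
        _ = ‖y - p‖ := norm_sub_rev _ _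
    have h3 : ⟪f p - f y, w⟫ = K - ⟪f y - f 0, w⟫ := by
      have : f p - f y = (K • w) - (f y - f 0) := by rw [hp]; abel
      rw [this, inner_sub_left, real_inner_smul_left, real_inner_self_eq_norm_sq, hw]
      ring
    linarith
  have hbound := submetry_norm_sub_bound y p hyp
  have h2K : (0:ℝ) < 2 * (K - ‖y‖) := by linarith
  have h2p : 2 * (K - ‖y‖) ≤ 2 * (‖p‖ - ‖y‖) := by linarith
  have hmono : ‖y‖ ^ 2 / (2 * (‖p‖ - ‖y‖)) ≤ ‖y‖ ^ 2 / (2 * (K - ‖y‖)) := by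
    gcongr
  linarith

end aux2

section aux3
variable {E F : Type*} [NormedAddCommGroup E] [InnerProductSpace ℝ E]
  [NormedAddCommGroup F] [InnerProductSpace ℝ F]

lemma submetry_lemC (f : E → F) (hlip : ∀ a b : E, dist (f a) (f b) ≤ dist a b)
    (hlift : ∀ (y' : F) (r : ℝ), dist (f 0) y' < r → ∃ z : E, f z = y' ∧ ‖z‖ < r)
    (w : F) (hw : ‖w‖ = 1) :
    ∃ u : ℕ → E, ∀ y : E, Tendsto (fun k => ⟪y, u k⟫) atTop (𝓝 ⟪f y - f 0, w⟫) := by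
  have hex : ∀ K : ℝ, 0 < K → ∀ w' : F, ‖w'‖ = 1 →
      ∃ p : E, f p = f 0 + K • w' ∧ ‖p‖ ≤ K + 1/K := by
    intro K hK w' hw'
    have hd : dist (f 0) (f 0 + K • w') < K + 1/K := by
      rw [dist_eq_norm]
      have : f 0 - (f 0 + K • w') = -(K • w') := by abel
      rw [this, norm_neg, norm_smul, hw', mul_one, Real.norm_eq_abs, abs_of_pos hK]
      have : 0 < 1/K := by positivity
      linarith
    obtain ⟨z, hz1, hz2⟩ := hlift _ _ hd
    exact ⟨z, hz1, hz2.le⟩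
  have hK1 : ∀ k : ℕ, (0:ℝ) < (k:ℝ) + 1 := fun k => by positivity
  choose p hp hpn using fun k : ℕ => hex ((k:ℝ)+1) (hK1 k) w hw
  have hwneg : ‖-w‖ = 1 := by rw [norm_neg]; exact hw
  choose q hq hqn using fun k : ℕ => hex ((k:ℝ)+1) (hK1 k) (-w) hwneg
  refine ⟨fun k => (‖p k‖)⁻¹ • p k, ?_⟩
  intro y
  set H : E → ℝ := fun z => ⟪f z - f 0, w⟫ with hHdef
  set e : ℕ → ℝ := fun k => 1/((k:ℝ)+1) + ‖y‖ ^ 2 / (2 * (((k:ℝ)+1) - ‖y‖)) with hedef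
  -- main pointwise estimate
  have hmain : ∀ k : ℕ, ‖y‖ < (k:ℝ) + 1 → |H y - ⟪y, p k⟫ / ‖p k‖| ≤ 3 * e k := by
    intro k hk
    have hky : ‖(-y : E)‖ < (k:ℝ) + 1 := by rwa [norm_neg]
    have h1 := submetry_lemP f hlip w hw _ (hK1 k) _ (hp k) (hpn k) y hk
    have h2' := submetry_lemP f hlip (-w) hwneg _ (hK1 k) _ (hq k) (hqn k) y hk
    have h3' := submetry_lemP f hlip w hw _ (hK1 k) _ (hp k) (hpn k) (-y) hky
    have h4' := submetry_lemP f hlip (-w) hwneg _ (hK1 k) _ (hq k) (hqn k) (-y) hky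
    rw [inner_neg_right] at h2' h4'
    rw [inner_neg_left] at h3' h4'
    rw [norm_neg] at h3' h4'
    rw [neg_div] at h3' h4'
    -- h2' : ⟪y, q k⟫/‖q k‖ - (...) ≤ -(H y) ; etc.
    have hH1 : ⟪f y - f 0, w⟫ = H y := rfl
    have hHm : ⟪f (-y) - f 0, w⟫ = H (-y) := rfl
    have hepos : (0:ℝ) ≤ 1/((k:ℝ)+1) := by positivity
    have hepos2 : (0:ℝ) ≤ ‖y‖ ^ 2 / (2 * (((k:ℝ)+1) - ‖y‖)) :=
      div_nonneg (sq_nonneg _) (by linarith)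
    rw [abs_le]
    constructor <;> simp only [hedef] <;>
      linarith [h1, h2', h3', h4', hH1, hHm, hepos, hepos2]
  -- the inner products written with smul
  have hform : ∀ k : ℕ, ⟪y, (‖p k‖)⁻¹ • p k⟫ = ⟪y, p k⟫ / ‖p k‖ := by
    intro k
    rw [real_inner_smul_right]
    rw [inv_mul_eq_div]
  -- limit of the error term
  have he0 : Tendsto (fun k : ℕ => 3 * e k) atTop (𝓝 0) := by
    have t1 : Tendsto (fun k : ℕ => 1/((k:ℝ)+1)) atTop (𝓝 0) :=
      tendsto_one_div_add_atTop_nhds_zero_nat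
    have hb : Tendsto (fun k : ℕ => 2 * (((k:ℝ)+1) - ‖y‖)) atTop atTop := by
      have heq : (fun k : ℕ => 2 * (((k:ℝ)+1) - ‖y‖))
          = fun k : ℕ => 2 * ((k:ℝ) + (1 - ‖y‖)) := by funext k; ring
      rw [heq]
      exact (tendsto_atTop_add_const_right atTop (1 - ‖y‖)
        tendsto_natCast_atTop_atTop).const_mul_atTop two_pos
    have t2 : Tendsto (fun k : ℕ => ‖y‖ ^ 2 / (2 * (((k:ℝ)+1) - ‖y‖))) atTop (𝓝 0) := by
      have := hb.inv_tendsto_atTop.const_mul (‖y‖ ^ 2)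
      simp only [mul_zero] at this
      simpa [div_eq_mul_inv] using this
    have h30 : (3:ℝ) * (0 + 0) = 0 := by norm_num
    have := Tendsto.const_mul (3:ℝ) (t1.add t2)
    rw [h30] at this
    exact this
  have hbnd : ∀ᶠ k : ℕ in atTop, ‖H y - ⟪y, p k⟫ / ‖p k‖‖ ≤ 3 * e k := by
    rw [eventually_atTop]
    refine ⟨⌈‖y‖⌉₊, fun k hk => ?_⟩
    have : ‖y‖ < (k:ℝ) + 1 := by
      have h1 : ‖y‖ ≤ (⌈‖y‖⌉₊ : ℝ) := Nat.le_ceil _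
      have h2 : ((⌈‖y‖⌉₊ : ℕ) : ℝ) ≤ (k : ℝ) := Nat.cast_le.2 hk
      linarith
    rw [Real.norm_eq_abs]
    exact hmain k this
  have hsq : Tendsto (fun k : ℕ => H y - ⟪y, p k⟫ / ‖p k‖) atTop (𝓝 0) :=
    squeeze_zero_norm' hbnd he0
  have := hsq.const_sub (H y)
  simp only [sub_zero] at this
  have heq2 : (fun k : ℕ => H y - (H y - ⟪y, p k⟫ / ‖p k‖)) = fun k : ℕ => ⟪y, p k⟫ / ‖p k‖ := by
    funext k; ring
  rw [heq2] at this
  simpa only [hform] using this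

end aux3

theorem stmt_8 (m n : ℕ)
    (f : EuclideanSpace ℝ (Fin m) → EuclideanSpace ℝ (Fin n))
    (hsurj : Function.Surjective f)
    (hsub : ∀ (x : EuclideanSpace ℝ (Fin m)) (r : ℝ), 0 < r →
      f '' ball x r = ball (f x) r) :
    ∃ (V : Submodule ℝ (EuclideanSpace ℝ (Fin m)))
      (e : V ≃ₗᵢ[ℝ] EuclideanSpace ℝ (Fin n)) (b : EuclideanSpace ℝ (Fin n)),
      Module.finrank ℝ V = n ∧
      ∀ x, f x = e (V.orthogonalProjectionOnto x) + b := by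
  -- f is 1-Lipschitz
  have hlip : ∀ a b, dist (f a) (f b) ≤ dist a b := by
    intro a b
    by_contra h
    push_neg at h
    have hr : 0 < dist (f a) (f b) := lt_of_le_of_lt dist_nonneg h
    have hmem : a ∈ ball b (dist (f a) (f b)) := mem_ball.2 h
    have : f a ∈ ball (f b) (dist (f a) (f b)) := by
      rw [← hsub b _ hr]
      exact mem_image_of_mem f hmem
    exact lt_irrefl _ (mem_ball.1 this)
  -- approximate lifts at the origin
  have hlift : ∀ (y' : EuclideanSpace ℝ (Fin n)) (r : ℝ), dist (f 0) y' < r →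
      ∃ z, f z = y' ∧ ‖z‖ < r := by
    intro y' r h
    have hr : 0 < r := lt_of_le_of_lt dist_nonneg h
    have : y' ∈ ball (f 0) r := by rw [mem_ball, dist_comm]; exact h
    rw [← hsub 0 r hr] at this
    obtain ⟨z, hz, rfl⟩ := this
    refine ⟨z, rfl, ?_⟩
    have := mem_ball.1 hz
    rwa [dist_zero_right] at this
  -- additivity and homogeneity of the coordinates
  have Hadd : ∀ (w : EuclideanSpace ℝ (Fin n)), ‖w‖ = 1 → ∀ (y y' : EuclideanSpace ℝ (Fin m)),
      ⟪f (y + y') - f 0, w⟫ = ⟪f y - f 0, w⟫ + ⟪f y' - f 0, w⟫ := by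
    intro w hw y y'
    obtain ⟨u, hu⟩ := submetry_lemC f hlip hlift w hw
    have h1 := hu (y + y')
    have h2 : Tendsto (fun k => ⟪y + y', u k⟫) atTop
        (𝓝 (⟪f y - f 0, w⟫ + ⟪f y' - f 0, w⟫)) := by
      have heq : (fun k => ⟪y + y', u k⟫) = fun k => ⟪y, u k⟫ + ⟪y', u k⟫ := by
        funext k; rw [inner_add_left]
      rw [heq]
      exact (hu y).add (hu y')
    exact tendsto_nhds_unique h1 h2
  have Hsmul : ∀ (w : EuclideanSpace ℝ (Fin n)), ‖w‖ = 1 → ∀ (t : ℝ) y,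
      ⟪f (t • y) - f 0, w⟫ = t * ⟪f y - f 0, w⟫ := by
    intro w hw t y
    obtain ⟨u, hu⟩ := submetry_lemC f hlip hlift w hw
    have h1 := hu (t • y)
    have h2 : Tendsto (fun k => ⟪t • y, u k⟫) atTop (𝓝 (t * ⟪f y - f 0, w⟫)) := by
      have heq : (fun k => ⟪t • y, u k⟫) = fun k => t * ⟪y, u k⟫ := by
        funext k; rw [real_inner_smul_left]
      rw [heq]
      exact (hu y).const_mul t
    exact tendsto_nhds_unique h1 h2
  -- coordinates
  have compo : ∀ (z : EuclideanSpace ℝ (Fin n)) (i : Fin n),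
      z i = ⟪z, EuclideanSpace.single i (1:ℝ)⟫ := by
    intro z i
    rw [EuclideanSpace.inner_single_right]
    simp
  have hw1 : ∀ i : Fin n, ‖(EuclideanSpace.single i (1:ℝ) : EuclideanSpace ℝ (Fin n))‖ = 1 := by
    intro i
    rw [EuclideanSpace.norm_single]
    norm_num
  -- build the continuous linear map L with L y = f y - f 0
  obtain ⟨L, hLapp⟩ : ∃ L : EuclideanSpace ℝ (Fin m) →L[ℝ] EuclideanSpace ℝ (Fin n),
      ∀ y, L y = f y - f 0 := by
    set g : EuclideanSpace ℝ (Fin m) → EuclideanSpace ℝ (Fin n) := fun y => f y - f 0 with hgdef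
    have gadd : ∀ y y', g (y + y') = g y + g y' := by
      intro y y'
      ext i
      have h1 := Hadd _ (hw1 i) y y'
      rw [← compo, ← compo, ← compo] at h1
      rw [PiLp.add_apply]
      exact h1
    have gsmul : ∀ (t : ℝ) y, g (t • y) = t • g y := by
      intro t y
      ext i
      have h1 := Hsmul _ (hw1 i) t y
      rw [← compo, ← compo] at h1
      rw [PiLp.smul_apply]
      exact h1
    have gbound : ∀ y, ‖g y‖ ≤ 1 * ‖y‖ := by
      intro y
      have := hlip y 0
      rw [dist_eq_norm, dist_eq_norm, sub_zero] at this
      simpa using this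
    exact ⟨LinearMap.mkContinuous
      { toFun := g, map_add' := gadd, map_smul' := gsmul } 1 gbound, fun y => rfl⟩
  have hLle : ∀ y, ‖L y‖ ≤ ‖y‖ := by
    intro y
    rw [hLapp]
    have := hlip y 0
    rw [dist_eq_norm, dist_eq_norm, sub_zero] at this
    simpa using this
  set T : EuclideanSpace ℝ (Fin n) →L[ℝ] EuclideanSpace ℝ (Fin m) :=
    ContinuousLinearMap.adjoint L with hTdef
  have hadj_left : ∀ v x, ⟪T v, x⟫ = ⟪v, L x⟫ := fun v x =>
    ContinuousLinearMap.adjoint_inner_left L x v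
  have hadj_right : ∀ x v, ⟪x, T v⟫ = ⟪L x, v⟫ := fun x v =>
    ContinuousLinearMap.adjoint_inner_right L x v
  -- T is norm preserving
  have hTle : ∀ v, ‖T v‖ ≤ ‖v‖ := by
    intro v
    have h1 : ‖T v‖ ^ 2 = ⟪T v, T v⟫ := (real_inner_self_eq_norm_sq _).symm
    have h2 : ⟪T v, T v⟫ = ⟪v, L (T v)⟫ := hadj_left v (T v)
    have h3 : ⟪v, L (T v)⟫ ≤ ‖v‖ * ‖L (T v)‖ := real_inner_le_norm _ _
    have h4 : ‖L (T v)‖ ≤ ‖T v‖ := hLle (T v)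
    have h5 : ‖T v‖ ^ 2 ≤ ‖v‖ * ‖T v‖ := by
      calc ‖T v‖ ^ 2 = ⟪v, L (T v)⟫ := by rw [h1, h2]
        _ ≤ ‖v‖ * ‖L (T v)‖ := h3
        _ ≤ ‖v‖ * ‖T v‖ := mul_le_mul_of_nonneg_left h4 (norm_nonneg v)
    nlinarith [h5, norm_nonneg (T v), norm_nonneg v]
  have hTunit : ∀ w, ‖w‖ = 1 → ‖T w‖ = 1 := by
    intro w hw
    refine le_antisymm (by simpa [hw] using hTle w) ?_
    by_contra hlt
    push_neg at hlt
    set c := ‖T w‖ with hcdef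
    have hc0 : 0 ≤ c := norm_nonneg _
    have hc1 : 0 < 1 + c := by linarith
    set ε := (1 - c)/(1 + c) with hεdef
    have hε : 0 < ε := div_pos (by linarith) hc1
    have hd : dist (f 0) (f 0 + w) < 1 + ε := by
      rw [dist_eq_norm]
      have h0 : f 0 - (f 0 + w) = -w := by abel
      rw [h0, norm_neg, hw]
      linarith
    obtain ⟨z, hz1, hz2⟩ := hlift _ _ hd
    have hLz : L z = w := by rw [hLapp, hz1]; abel
    have hone : (1 : ℝ) = ⟪T w, z⟫ := by
      rw [hadj_left, hLz, real_inner_self_eq_norm_sq, hw]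
      norm_num
    have h6 : (1:ℝ) ≤ c * (1 + ε) := by
      calc (1:ℝ) = ⟪T w, z⟫ := hone
        _ ≤ ‖T w‖ * ‖z‖ := real_inner_le_norm _ _
        _ ≤ c * (1 + ε) := mul_le_mul_of_nonneg_left hz2.le hc0
    have h7 : c * (1 + ε) = 2 * c / (1 + c) := by
      rw [hεdef]; field_simp; ring
    rw [h7] at h6
    have h8 : 1 * (1 + c) ≤ 2 * c := by
      rw [← le_div_iff₀ hc1]; simpa using h6
    linarith
  have hTiso : ∀ v, ‖T v‖ = ‖v‖ := by
    intro v
    rcases eq_or_ne v 0 with rfl | hv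
    · simp
    · have hnv : 0 < ‖v‖ := norm_pos_iff.2 hv
      have hunit : ‖(‖v‖⁻¹ • v : EuclideanSpace ℝ (Fin n))‖ = 1 := by
        rw [norm_smul, norm_inv, norm_norm, inv_mul_cancel₀ hnv.ne']
      have h1 : T v = ‖v‖ • T (‖v‖⁻¹ • v) := by
        rw [map_smul, smul_smul, mul_inv_cancel₀ hnv.ne', one_smul]
      rw [h1, norm_smul, hTunit _ hunit, norm_norm, mul_one]
  set Ti : EuclideanSpace ℝ (Fin n) →ₗᵢ[ℝ] EuclideanSpace ℝ (Fin m) :=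
    { toLinearMap := (T : EuclideanSpace ℝ (Fin n) →ₗ[ℝ] EuclideanSpace ℝ (Fin m)),
      norm_map' := hTiso } with hTidef
  set V : Submodule ℝ (EuclideanSpace ℝ (Fin m)) := LinearMap.range Ti.toLinearMap with hVdef
  set e : V ≃ₗᵢ[ℝ] EuclideanSpace ℝ (Fin n) := Ti.equivRange.symm with hedef
  refine ⟨V, e, f 0, ?_, ?_⟩
  · have h1 : Module.finrank ℝ V = Module.finrank ℝ (EuclideanSpace ℝ (Fin n)) :=
      e.toLinearEquiv.finrank_eq
    rw [h1]
    exact finrank_euclideanSpace_fin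
  · intro x
    have hmem : T (L x) ∈ V := ⟨L x, rfl⟩
    have horth : ∀ v ∈ V, ⟪x - T (L x), v⟫ = 0 := by
      intro v hv
      obtain ⟨w', rfl⟩ := hv
      have h1 : ⟪x, T w'⟫ = ⟪L x, w'⟫ := hadj_right x w'
      have h2 : ⟪T (L x), T w'⟫ = ⟪L x, w'⟫ := Ti.inner_map_map (L x) w'
      rw [inner_sub_left]
      rw [show Ti.toLinearMap w' = T w' from rfl]
      rw [h1, h2]
      ring
    have hcoe : (V.orthogonalProjectionOnto x : EuclideanSpace ℝ (Fin m)) = T (L x) :=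
      V.eq_starProjection_of_mem_of_inner_eq_zero hmem horth
    have hproj : V.orthogonalProjectionOnto x = Ti.equivRange (L x) := by
      apply Subtype.ext
      rw [hcoe]
      rfl
    have hfin : e (V.orthogonalProjectionOnto x) = L x := by
      rw [hproj, hedef]
      exact Ti.equivRange.symm_apply_apply (L x)
    rw [hfin, hLapp]
    abel
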